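/- Fast descent to the metastable magnetization at low temperature: let β > 1 and let s* denote the unique positive solution of tanh(βs) = s. For α > 0, let τ* := inf{t ≥ 0 : S⁺_t ≤ s* + α·n^{-1/2}} for the restricted magnetization chain (S⁺_t). Then there exists a constant c > 0, depending only on α and β, such that for every starting state, P(τ* > c·n·log n) → 0 as n → ∞. -/

import Mathlib

open Filter Real

namespace CW

/-- Configurations of the Curie-Weiss model on `n` vertices:
`true` encodes spin `+1` and `false` encodes spin `-1`. -/
abbrev Config (n : ℕ) := Fin n → Bool

noncomputable section

/-- The spin (±1) at site `i`. -/
def spin {n : ℕ} (σ : Config n) (i : Fin n) : ℝ := if σ i then 1 else -1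

/-- Normalized magnetization `S(σ) = n⁻¹ ∑ᵢ σ(i)`. -/
def mag {n : ℕ} (σ : Config n) : ℝ := (∑ i, spin σ i) / n

/-- `p₊(s) = (1 + tanh(βs))/2`. -/
def pPlus (β s : ℝ) : ℝ := (1 + Real.tanh (β * s)) / 2

/-- One-step transition kernel of the Glauber dynamics for the Curie-Weiss
model: a uniformly chosen site `i` is refreshed, becoming `+1` with
probability `p₊(S(σ) - σ(i)/n)`. -/
def glauberKernel (β : ℝ) (n : ℕ) (σ η : Config n) : ℝ :=
  (1 / n) * ∑ i : Fin n,
    if ∀ j, j ≠ i → η j = σ j then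
      (if η i then pPlus β (mag σ - spin σ i / n)
       else 1 - pPlus β (mag σ - spin σ i / n))
    else 0

/-- Law of the Glauber dynamics at time `t` started from `σ`. -/
def glauberLaw (β : ℝ) (n : ℕ) : ℕ → Config n → Config n → ℝ
  | 0, σ, η => if η = σ then 1 else 0
  | t + 1, σ, η => ∑ τ : Config n, glauberLaw β n t σ τ * glauberKernel β n τ η

/-- The (normalized) exponent in the Curie-Weiss measure. -/
def cwExponent {n : ℕ} (β : ℝ) (σ : Config n) : ℝ :=
  (β / n) * ∑ i : Fin n, ∑ j : Fin n, if i < j then spin σ i * spin σ j else 0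

/-- The Curie-Weiss (mean-field Ising) probability measure
`μ(σ) = Z(β)⁻¹ exp((β/n) ∑_{i<j} σ(i)σ(j))`. -/
def cwMeasure (β : ℝ) (n : ℕ) (σ : Config n) : ℝ :=
  Real.exp (cwExponent β σ) / ∑ η : Config n, Real.exp (cwExponent β η)

/-- Total variation distance between two (discrete) distributions. -/
def tvDist {Ω : Type*} [Fintype Ω] (μ ν : Ω → ℝ) : ℝ :=
  (∑ x, |μ x - ν x|) / 2

/-- Worst-case total variation distance to stationarity at time `t`. -/
def glauberDist (β : ℝ) (n t : ℕ) : ℝ :=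
  ⨆ σ : Config n, tvDist (glauberLaw β n t σ) (cwMeasure β n)

/-- The global spin flip `σ ↦ -σ`. -/
def negConfig {n : ℕ} (σ : Config n) : Config n := fun i => !(σ i)

/-- Transition kernel of the Glauber dynamics restricted to the set
`Ω⁺ = {σ : S(σ) ≥ 0}`: a candidate move `η'` is generated by the Glauber
dynamics; if `S(η') ≥ 0` the chain moves to `η'`, otherwise it moves
to `-η'`. -/
def rKernel (β : ℝ) (n : ℕ) (σ η : Config n) : ℝ :=
  (if 0 ≤ mag η then glauberKernel β n σ η else 0) +
    (if mag (negConfig η) < 0 then glauberKernel β n σ (negConfig η) else 0)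

/-- Law of the restricted Glauber dynamics at time `t` started from `σ`. -/
def rLaw (β : ℝ) (n : ℕ) : ℕ → Config n → Config n → ℝ
  | 0, σ, η => if η = σ then 1 else 0
  | t + 1, σ, η => ∑ τ : Config n, rLaw β n t σ τ * rKernel β n τ η


/-- Probability that the restricted magnetization chain started from `σ` stays
strictly above the level `b` at all times `0, 1, …, t`; that is,
`P_σ(S⁺_0 > b, S⁺_1 > b, …, S⁺_t > b)`. -/
def surviveAbove (β : ℝ) (n : ℕ) (b : ℝ) : ℕ → Config n → ℝ
  | 0, σ => if b < mag σ then 1 else 0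
  | t + 1, σ =>
      if b < mag σ then ∑ η, rKernel β n σ η * surviveAbove β n b t η else 0


lemma tanh_sq_lt_one (x : ℝ) : Real.tanh x ^ 2 < 1 := by
  rw [Real.tanh_eq_sinh_div_cosh, div_pow, div_lt_one (by positivity)]
  nlinarith [Real.cosh_sq_sub_sinh_sq x]

lemma hasDerivAt_tanh' (x : ℝ) : HasDerivAt Real.tanh (1 - Real.tanh x ^ 2) x := by
  have h : HasDerivAt (fun y => Real.sinh y / Real.cosh y)
      ((Real.cosh x * Real.cosh x - Real.sinh x * Real.sinh x) / Real.cosh x ^ 2) x :=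
    (Real.hasDerivAt_sinh x).div (Real.hasDerivAt_cosh x) (ne_of_gt (Real.cosh_pos x))
  have he : Real.tanh = fun y => Real.sinh y / Real.cosh y := by
    funext y; exact Real.tanh_eq_sinh_div_cosh y
  rw [he]
  convert h using 1
  have hc := Real.cosh_pos x
  show 1 - (Real.sinh x / Real.cosh x) ^ 2 = _
  field_simp

lemma tanh_strictMono' : StrictMono Real.tanh :=
  strictMono_of_deriv_pos (fun x => by
    rw [(hasDerivAt_tanh' x).deriv]; nlinarith [tanh_sq_lt_one x])

lemma tanh_nonneg' {x : ℝ} (hx : 0 ≤ x) : 0 ≤ Real.tanh x := by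
  simpa [Real.tanh_zero] using tanh_strictMono'.monotone hx

lemma hasDerivAt_tanh_lin (β x : ℝ) :
    HasDerivAt (fun s => Real.tanh (β * s)) (β * (1 - Real.tanh (β * x) ^ 2)) x := by
  have h := (hasDerivAt_tanh' (β * x)).comp x ((hasDerivAt_id x).const_mul β)
  simpa [mul_comm, Function.comp_def] using h

lemma tanh_sq_mono {a b : ℝ} (ha : 0 ≤ a) (hab : a ≤ b) :
    Real.tanh a ^ 2 ≤ Real.tanh b ^ 2 :=
  pow_le_pow_left₀ (tanh_nonneg' ha) (tanh_strictMono'.monotone hab) 2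

lemma tanh_tangent {β sstar : ℝ} (hβ : 0 < β) (hs0 : 0 < sstar)
    (hfix : Real.tanh (β * sstar) = sstar) {s : ℝ} (hs : 0 ≤ s) :
    Real.tanh (β * s) ≤ sstar + β * (1 - Real.tanh (β * sstar) ^ 2) * (s - sstar) := by
  set L := β * (1 - Real.tanh (β * sstar) ^ 2) with hL
  rcases lt_trichotomy s sstar with h | h | h
  · obtain ⟨c, hc, hcd⟩ := exists_hasDerivAt_eq_slope (fun x => Real.tanh (β * x))
      (fun x => β * (1 - Real.tanh (β * x) ^ 2)) h
      (fun x _ => (hasDerivAt_tanh_lin β x).continuousAt.continuousWithinAt)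
      (fun x _ => hasDerivAt_tanh_lin β x)
    have hsq : Real.tanh (β * c) ^ 2 ≤ Real.tanh (β * sstar) ^ 2 :=
      tanh_sq_mono (mul_nonneg hβ.le (hs.trans hc.1.le))
        (mul_le_mul_of_nonneg_left hc.2.le hβ.le)
    have h0 : 0 < sstar - s := by linarith
    have hge : L ≤ (Real.tanh (β * sstar) - Real.tanh (β * s)) / (sstar - s) := by
      rw [← hcd, hL]; nlinarith
    rw [hfix] at hge
    have := (le_div_iff₀ h0).mp hge
    nlinarith
  · rw [h]; simp [hfix]
  · obtain ⟨c, hc, hcd⟩ := exists_hasDerivAt_eq_slope (fun x => Real.tanh (β * x))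
      (fun x => β * (1 - Real.tanh (β * x) ^ 2)) h
      (fun x _ => (hasDerivAt_tanh_lin β x).continuousAt.continuousWithinAt)
      (fun x _ => hasDerivAt_tanh_lin β x)
    have hsq : Real.tanh (β * sstar) ^ 2 ≤ Real.tanh (β * c) ^ 2 :=
      tanh_sq_mono (mul_nonneg hβ.le hs0.le)
        (mul_le_mul_of_nonneg_left hc.1.le hβ.le)
    rw [hfix] at hcd
    have hd : (Real.tanh (β * s) - sstar) / (s - sstar) ≤ L := by
      rw [← hcd, hL]; nlinarith
    have := (div_le_iff₀ (by linarith : (0:ℝ) < s - sstar)).mp hd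
    linarith

lemma L_lt_one {β sstar : ℝ} (hβ : 1 < β) (hs0 : 0 < sstar)
    (hfix : Real.tanh (β * sstar) = sstar) :
    β * (1 - Real.tanh (β * sstar) ^ 2) < 1 := by
  have hd := hasDerivAt_tanh_lin β 0
  rw [hasDerivAt_iff_tendsto_slope] at hd
  have hβ' : (0:ℝ) < β := by linarith
  simp only [mul_zero, Real.tanh_zero] at hd
  have h1 : ∀ᶠ y in nhdsWithin 0 {(0:ℝ)}ᶜ, 1 < slope (fun s => Real.tanh (β * s)) 0 y :=
    hd.eventually (eventually_gt_nhds (by simpa using hβ))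
  have h2 : ∀ᶠ y in nhdsWithin 0 (Set.Ioi 0), 1 < slope (fun s => Real.tanh (β * s)) 0 y :=
    h1.filter_mono (nhdsWithin_mono 0 (fun x hx => ne_of_gt hx))
  have h3 : Set.Ioo (0:ℝ) sstar ∈ nhdsWithin 0 (Set.Ioi 0) :=
    Ioo_mem_nhdsGT hs0
  obtain ⟨s₀, hslope, hmem⟩ := (h2.and (eventually_of_mem h3 (fun x hx => hx))).exists
  have hs₀ : 0 < s₀ := hmem.1
  rw [slope_def_field] at hslope
  simp only [mul_zero, Real.tanh_zero, sub_zero] at hslope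
  have htanh : s₀ < Real.tanh (β * s₀) := by
    have := (lt_div_iff₀ hs₀).mp hslope
    linarith
  have htan := tanh_tangent hβ' hs0 hfix hs₀.le
  nlinarith [hmem.2]

lemma spin_update {n : ℕ} (σ : Config n) (i : Fin n) (b : Bool) :
    (fun j => spin (Function.update σ i b) j)
      = Function.update (fun j => spin σ j) i (if b then 1 else -1) := by
  funext j
  by_cases h : j = i
  · subst h; simp [spin, Function.update_self]
  · simp [spin, Function.update_of_ne h]

lemma sum_spin_update {n : ℕ} (σ : Config n) (i : Fin n) (b : Bool) :
    ∑ j, spin (Function.update σ i b) j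
      = (∑ j, spin σ j) - spin σ i + (if b then 1 else -1) := by
  rw [show (∑ j, spin (Function.update σ i b) j)
      = ∑ j, Function.update (fun j => spin σ j) i (if b then (1:ℝ) else -1) j from
    Finset.sum_congr rfl (fun j _ => congrFun (spin_update σ i b) j)]
  rw [Finset.sum_update_of_mem (Finset.mem_univ i)]
  rw [Finset.sum_sdiff_eq_sub (Finset.subset_univ {i}), Finset.sum_singleton]
  ring

lemma mag_update {n : ℕ} (σ : Config n) (i : Fin n) (b : Bool) :
    mag (Function.update σ i b)
      = mag σ - spin σ i / n + (if b then 1 else -1) / n := by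
  unfold mag
  rw [sum_spin_update]
  rw [add_div, sub_div]

lemma filter_agree {n : ℕ} (σ : Config n) (i : Fin n) :
    (Finset.univ.filter (fun η : Config n => ∀ j, j ≠ i → η j = σ j))
      = {Function.update σ i true, Function.update σ i false} := by
  ext η
  simp only [Finset.mem_filter, Finset.mem_univ, true_and, Finset.mem_insert,
    Finset.mem_singleton]
  constructor
  · intro h
    have he : η = Function.update σ i (η i) := by
      funext j
      by_cases hj : j = i
      · subst hj; simp [Function.update_self]
      · rw [Function.update_of_ne hj]; exact h j hj
    cases hb : η i
    · right; rw [he, hb]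
    · left; rw [he, hb]
  · rintro (rfl | rfl) j hj <;> rw [Function.update_of_ne hj]

lemma update_true_ne_false {n : ℕ} (σ : Config n) (i : Fin n) :
    Function.update σ i true ≠ Function.update σ i false := by
  intro h
  have := congrFun h i
  simp [Function.update_self] at this

lemma kernel_sum {n : ℕ} (β : ℝ) (σ : Config n) (G : Config n → ℝ) :
    ∑ η, glauberKernel β n σ η * G η
      = (1 / n) * ∑ i : Fin n,
          (pPlus β (mag σ - spin σ i / n) * G (Function.update σ i true)
            + (1 - pPlus β (mag σ - spin σ i / n)) * G (Function.update σ i false)) := by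
  unfold glauberKernel
  rw [Finset.sum_congr rfl (fun η _ => by
    rw [mul_assoc, ← Finset.sum_mul, Finset.sum_mul] :
    ∀ η ∈ Finset.univ, _ = (1/(n:ℝ)) * ∑ i : Fin n,
      (if ∀ j, j ≠ i → η j = σ j then
        (if η i then pPlus β (mag σ - spin σ i / n)
         else 1 - pPlus β (mag σ - spin σ i / n)) else 0) * G η)]
  rw [← Finset.mul_sum, Finset.sum_comm]
  congr 1
  refine Finset.sum_congr rfl (fun i _ => ?_)
  simp only [ite_mul, zero_mul]
  rw [← Finset.sum_filter, filter_agree, Finset.sum_pair (update_true_ne_false σ i)]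
  simp [Function.update_self]

lemma pPlus_nonneg (β s : ℝ) : 0 ≤ pPlus β s := by
  unfold pPlus; nlinarith [tanh_sq_lt_one (β * s)]

lemma pPlus_le_one (β s : ℝ) : pPlus β s ≤ 1 := by
  unfold pPlus; nlinarith [tanh_sq_lt_one (β * s)]

lemma glauberKernel_nonneg (β : ℝ) (n : ℕ) (σ η : Config n) :
    0 ≤ glauberKernel β n σ η := by
  unfold glauberKernel
  apply mul_nonneg (by positivity)
  apply Finset.sum_nonneg
  intro i _
  have h1 := pPlus_nonneg β (mag σ - spin σ i / n)
  have h2 := pPlus_le_one β (mag σ - spin σ i / n)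
  split_ifs <;> linarith

lemma rKernel_nonneg (β : ℝ) (n : ℕ) (σ η : Config n) :
    0 ≤ rKernel β n σ η := by
  unfold rKernel
  have h1 := glauberKernel_nonneg β n σ η
  have h2 := glauberKernel_nonneg β n σ (negConfig η)
  split_ifs <;> linarith

lemma spin_neg {n : ℕ} (η : Config n) (i : Fin n) :
    spin (negConfig η) i = -spin η i := by
  unfold spin negConfig
  cases η i <;> simp

lemma mag_neg {n : ℕ} (η : Config n) : mag (negConfig η) = -mag η := by
  unfold mag
  rw [Finset.sum_congr rfl (fun i _ => spin_neg η i), Finset.sum_neg_distrib, neg_div]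

lemma negConfig_invol {n : ℕ} : Function.Involutive (negConfig (n := n)) := by
  intro η; funext i; simp [negConfig]

lemma rKernel_sum {n : ℕ} (β : ℝ) (σ : Config n) (f : Config n → ℝ) :
    ∑ η, rKernel β n σ η * f η
      = ∑ η, glauberKernel β n σ η *
          ((if 0 ≤ mag η then f η else 0) + (if mag η < 0 then f (negConfig η) else 0)) := by
  unfold rKernel
  simp only [add_mul, mul_add, Finset.sum_add_distrib]
  congr 1
  · exact Finset.sum_congr rfl (fun η _ => by split_ifs <;> ring)
  · rw [← Function.Bijective.sum_comp (negConfig_invol (n := n)).bijective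
      (fun η => glauberKernel β n σ η * if mag η < 0 then f (negConfig η) else 0)]
    refine Finset.sum_congr rfl (fun η _ => ?_)
    simp only [Function.comp, negConfig_invol η, mag_neg (negConfig η),
      negConfig_invol]
    split_ifs <;> ring

lemma mag_nonneg_of {n : ℕ} {σ : Config n} {x : ℝ} (h : 0 < x) (hx : x ≤ mag σ) :
    0 < mag σ := lt_of_lt_of_le h hx

lemma sum_si {n : ℕ} (σ : Config n) :
    ∑ i : Fin n, (mag σ - spin σ i / n) = n * mag σ - mag σ := by
  rw [Finset.sum_sub_distrib, Finset.sum_const, Finset.card_univ, Fintype.card_fin,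
    ← Finset.sum_div, nsmul_eq_mul]
  rfl

lemma step_bound {β sstar : ℝ} (hβ : 1 < β) (hs0 : 0 < sstar)
    (hfix : Real.tanh (β * sstar) = sstar)
    {n : ℕ} (hn : 1 ≤ n) {b : ℝ} (hb2 : sstar + 2 / (n : ℝ) ≤ b)
    (σ : Config n) (hσ : b < mag σ) :
    ∑ η, rKernel β n σ η * (if b < mag η then mag η - sstar else 0)
      ≤ (1 - (1 - β * (1 - Real.tanh (β * sstar) ^ 2)) / n) * (mag σ - sstar) := by
  have hn0 : (0:ℝ) < n := by exact_mod_cast hn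
  have hβ0 : (0:ℝ) < β := by linarith
  set L := β * (1 - Real.tanh (β * sstar) ^ 2) with hLdef
  have hL0 : 0 ≤ L := by
    have := tanh_sq_lt_one (β * sstar); rw [hLdef]; nlinarith
  set f : Config n → ℝ := fun η => if b < mag η then mag η - sstar else 0 with hf
  set G : Config n → ℝ := fun η =>
    (if 0 ≤ mag η then f η else 0) + (if mag η < 0 then f (negConfig η) else 0) with hG
  rw [rKernel_sum β σ f, kernel_sum β σ G]
  -- pointwise bound on G at updates
  have hGb : ∀ (i : Fin n) (bb : Bool),
      G (Function.update σ i bb) ≤ mag (Function.update σ i bb) - sstar := by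
    intro i bb
    have hspin : spin σ i ≤ 1 ∧ -1 ≤ spin σ i := by
      unfold spin; split_ifs <;> norm_num
    have hval : (if bb then (1:ℝ) else -1) ≤ 1 ∧ -1 ≤ (if bb then (1:ℝ) else -1) := by
      cases bb <;> norm_num
    have hm : mag σ - 2 / n ≤ mag (Function.update σ i bb) := by
      rw [mag_update]
      have h1 : spin σ i / n ≤ 1 / n := by gcongr; exact hspin.1
      have h2 : (-1:ℝ) / n ≤ (if bb then (1:ℝ) else -1) / n := by gcongr; exact hval.2
      have h3 : (2:ℝ) / n = 1 / n + 1 / n := by ring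
      have h4 : (-1:ℝ) / n = -(1 / n) := by ring
      linarith
    have hms : sstar < mag (Function.update σ i bb) := by
      have : sstar + 2 / n ≤ b := hb2
      linarith
    have hmpos : 0 ≤ mag (Function.update σ i bb) := by linarith
    rw [hG]
    simp only [if_pos hmpos, if_neg (not_lt.mpr hmpos), add_zero, hf]
    split_ifs with h
    · exact le_rfl
    · linarith
  -- per-site bound
  have hpb : ∀ i : Fin n,
      pPlus β (mag σ - spin σ i / n) * G (Function.update σ i true)
        + (1 - pPlus β (mag σ - spin σ i / n)) * G (Function.update σ i false)
      ≤ (mag σ - spin σ i / n - sstar)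
          + (sstar + L * ((mag σ - spin σ i / n) - sstar)) / n := by
    intro i
    set si := mag σ - spin σ i / n with hsi
    have hspin : spin σ i ≤ 1 ∧ -1 ≤ spin σ i := by
      unfold spin; split_ifs <;> norm_num
    have hsin : spin σ i / n ≤ 1 / n := by gcongr; exact hspin.1
    have h1n : (1:ℝ)/n ≤ 2/n := by gcongr <;> norm_num
    have hsipos : 0 ≤ si := by rw [hsi]; linarith
    have hp0 := pPlus_nonneg β si
    have hp1 := pPlus_le_one β si
    have step1 : pPlus β si * G (Function.update σ i true)
        + (1 - pPlus β si) * G (Function.update σ i false)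
        ≤ pPlus β si * (mag (Function.update σ i true) - sstar)
          + (1 - pPlus β si) * (mag (Function.update σ i false) - sstar) :=
      add_le_add (mul_le_mul_of_nonneg_left (hGb i true) hp0)
        (mul_le_mul_of_nonneg_left (hGb i false) (by linarith))
    have e : pPlus β si * (mag (Function.update σ i true) - sstar)
        + (1 - pPlus β si) * (mag (Function.update σ i false) - sstar)
        = (si - sstar) + Real.tanh (β * si) / n := by
      rw [mag_update, mag_update]
      norm_num
      unfold pPlus
      rw [hsi]
      ring
    have htt : Real.tanh (β * si) ≤ sstar + L * (si - sstar) :=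
      tanh_tangent (by linarith) hs0 hfix hsipos
    have htt2 : Real.tanh (β * si) / n ≤ (sstar + L * (si - sstar)) / n := by
      gcongr
    exact step1.trans (e.le.trans (by linarith))
  have hsum1 : (1 / (n:ℝ)) * ∑ i : Fin n,
      (pPlus β (mag σ - spin σ i / n) * G (Function.update σ i true)
        + (1 - pPlus β (mag σ - spin σ i / n)) * G (Function.update σ i false))
      ≤ (1 / (n:ℝ)) * ∑ i : Fin n,
        ((mag σ - spin σ i / n - sstar)
          + (sstar + L * ((mag σ - spin σ i / n) - sstar)) / n) :=
    mul_le_mul_of_nonneg_left (Finset.sum_le_sum (fun i _ => hpb i)) (by positivity)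
  have expand : ∀ i : Fin n,
      (mag σ - spin σ i / n - sstar) + (sstar + L * ((mag σ - spin σ i / n) - sstar)) / n
        = (1 + L / n) * (mag σ - spin σ i / n) + (sstar / n - sstar - L * sstar / n) :=
    fun i => by ring
  have hsum2 : ∑ i : Fin n,
      ((mag σ - spin σ i / n - sstar) + (sstar + L * ((mag σ - spin σ i / n) - sstar)) / n)
      = (1 + L / n) * ((n:ℝ) * mag σ - mag σ) + (n:ℝ) * (sstar / n - sstar - L * sstar / n) := by
    rw [Finset.sum_congr rfl (fun i _ => expand i), Finset.sum_add_distrib,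
      ← Finset.mul_sum, sum_si, Finset.sum_const, Finset.card_univ, Fintype.card_fin,
      nsmul_eq_mul]
  rw [hsum2] at hsum1
  refine hsum1.trans ?_
  have hspos : 0 < mag σ := by
    have : (0:ℝ) < 2 / n := by positivity
    linarith
  have hdiff : (1 - (1 - L) / n) * (mag σ - sstar)
      - (1 / (n:ℝ)) * ((1 + L / n) * ((n:ℝ) * mag σ - mag σ)
          + (n:ℝ) * (sstar / n - sstar - L * sstar / n))
      = L * mag σ / (n:ℝ) ^ 2 := by
    field_simp
    ring
  have hnn : 0 ≤ L * mag σ / (n:ℝ) ^ 2 :=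
    div_nonneg (mul_nonneg hL0 hspos.le) (sq_nonneg _)
  linarith

lemma surviveAbove_zero_of {β : ℝ} {n : ℕ} {b : ℝ} {σ : Config n}
    (h : ¬ b < mag σ) (t : ℕ) : surviveAbove β n b t σ = 0 := by
  cases t <;> simp [surviveAbove, h]

lemma surviveAbove_nonneg (β : ℝ) (n : ℕ) (b : ℝ) :
    ∀ t (σ : Config n), 0 ≤ surviveAbove β n b t σ := by
  intro t
  induction t with
  | zero => intro σ; unfold surviveAbove; split_ifs <;> norm_num
  | succ t ih =>
    intro σ
    unfold surviveAbove
    split_ifs with h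
    · exact Finset.sum_nonneg (fun η _ => mul_nonneg (rKernel_nonneg β n σ η) (ih η))
    · exact le_rfl

lemma survive_bound {β sstar : ℝ} (hβ : 1 < β) (hs0 : 0 < sstar)
    (hfix : Real.tanh (β * sstar) = sstar)
    {n : ℕ} (hn : 1 ≤ n) {b : ℝ} (hb2 : sstar + 2 / (n : ℝ) ≤ b) :
    ∀ t (σ : Config n), b < mag σ →
      surviveAbove β n b t σ
        ≤ (1 - (1 - β * (1 - Real.tanh (β * sstar) ^ 2)) / n) ^ t
            * ((mag σ - sstar) / (b - sstar)) := by
  have hn0 : (0:ℝ) < n := by exact_mod_cast hn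
  set L := β * (1 - Real.tanh (β * sstar) ^ 2) with hLdef
  have hL0 : 0 ≤ L := by
    have := tanh_sq_lt_one (β * sstar); rw [hLdef]; nlinarith
  have hL1 : L < 1 := L_lt_one hβ hs0 hfix
  set ρ := 1 - (1 - L) / (n:ℝ) with hρ
  have hρ0 : 0 ≤ ρ := by
    rw [hρ]
    have h1 : (1 - L) / (n:ℝ) ≤ 1 / n := by gcongr; linarith
    have h2 : (1:ℝ) / n ≤ 1 := by
      rw [div_le_one hn0]; exact_mod_cast hn
    linarith
  have hbs : 0 < b - sstar := by
    have : (0:ℝ) < 2 / n := by positivity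
    linarith
  intro t
  induction t with
  | zero =>
    intro σ hσ
    unfold surviveAbove
    rw [if_pos hσ, pow_zero, one_mul, le_div_iff₀ hbs]
    linarith
  | succ t ih =>
    intro σ hσ
    unfold surviveAbove
    rw [if_pos hσ]
    have hterm : ∀ η : Config n,
        rKernel β n σ η * surviveAbove β n b t η
          ≤ rKernel β n σ η * ((ρ ^ t / (b - sstar))
              * (if b < mag η then mag η - sstar else 0)) := by
      intro η
      apply mul_le_mul_of_nonneg_left _ (rKernel_nonneg β n σ η)
      by_cases h : b < mag η
      · rw [if_pos h]
        have := ih η h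
        calc surviveAbove β n b t η ≤ ρ ^ t * ((mag η - sstar) / (b - sstar)) := this
          _ = ρ ^ t / (b - sstar) * (mag η - sstar) := by ring
      · rw [if_neg h, surviveAbove_zero_of h, mul_zero]
    calc ∑ η, rKernel β n σ η * surviveAbove β n b t η
        ≤ ∑ η, rKernel β n σ η * ((ρ ^ t / (b - sstar))
            * (if b < mag η then mag η - sstar else 0)) :=
          Finset.sum_le_sum (fun η _ => hterm η)
      _ = (ρ ^ t / (b - sstar))
            * ∑ η, rKernel β n σ η * (if b < mag η then mag η - sstar else 0) := by
          rw [Finset.mul_sum]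
          exact Finset.sum_congr rfl (fun η _ => by ring)
      _ ≤ (ρ ^ t / (b - sstar)) * (ρ * (mag σ - sstar)) := by
          apply mul_le_mul_of_nonneg_left _ (by positivity)
          exact step_bound hβ hs0 hfix hn hb2 σ hσ
      _ = ρ ^ (t + 1) * ((mag σ - sstar) / (b - sstar)) := by
          rw [pow_succ]; ring

lemma mag_le_one {n : ℕ} (σ : Config n) : mag σ ≤ 1 := by
  unfold mag
  rcases Nat.eq_zero_or_pos n with h | h
  · subst h; simp
  · have hn0 : (0:ℝ) < n := by exact_mod_cast h
    rw [div_le_one hn0]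
    calc ∑ i, spin σ i ≤ ∑ _i : Fin n, (1:ℝ) :=
          Finset.sum_le_sum (fun i _ => by unfold spin; split_ifs <;> norm_num)
      _ = n := by simp

lemma mag_true_nonneg (n : ℕ) : 0 ≤ mag (fun _ => true : Config n) := by
  unfold mag
  apply div_nonneg _ (Nat.cast_nonneg n)
  apply Finset.sum_nonneg
  intro i _
  unfold spin; norm_num


set_option maxHeartbeats 1000000

/-- Fast descent to the metastable magnetization at low temperature: let
`β > 1` and let `s⋆` be the unique positive solution of `tanh(βs) = s`.
For every `α > 0`, with `τ⋆ = inf{t : S⁺_t ≤ s⋆ + α n^{-1/2}}`, there is a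
constant `c > 0` (depending on `α` and `β`) such that, uniformly over
starting states in `Ω⁺`, `P(τ⋆ > c n log n) → 0` as `n → ∞`. -/
theorem lowtemp_descent (β : ℝ) (hβ : 1 < β) (sstar : ℝ) (hs0 : 0 < sstar)
    (hfix : Real.tanh (β * sstar) = sstar)
    (huniq : ∀ y : ℝ, 0 < y → Real.tanh (β * y) = y → y = sstar)
    (α : ℝ) (hα : 0 < α) :
    ∃ c > (0 : ℝ),
      Filter.Tendsto (fun n : ℕ =>
          ⨆ σ : {σ : Config n // 0 ≤ mag σ},
            surviveAbove β n (sstar + α / Real.sqrt n)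
              ⌊c * n * Real.log n⌋₊ σ.1)
        Filter.atTop (nhds 0) := by
  have hβ0 : (0:ℝ) < β := by linarith
  set L := β * (1 - Real.tanh (β * sstar) ^ 2) with hLdef
  have hL0 : 0 ≤ L := by
    have := tanh_sq_lt_one (β * sstar); rw [hLdef]; nlinarith
  have hL1 : L < 1 := L_lt_one hβ hs0 hfix
  set γ := 1 - L with hγdef
  have hγ0 : 0 < γ := by rw [hγdef]; linarith
  have hγ1 : γ ≤ 1 := by rw [hγdef]; linarith
  set c := 2 / γ with hcdef
  refine ⟨c, by positivity, ?_⟩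
  -- the supremum is over a nonempty finite type
  have hne : ∀ n : ℕ, Nonempty {σ : Config n // 0 ≤ mag σ} :=
    fun n => ⟨⟨fun _ => true, mag_true_nonneg n⟩⟩
  have hnonneg : ∀ n : ℕ, 0 ≤ ⨆ σ : {σ : Config n // 0 ≤ mag σ},
      surviveAbove β n (sstar + α / Real.sqrt n) ⌊c * n * Real.log n⌋₊ σ.1 := by
    intro n
    have := hne n
    obtain ⟨σ₀⟩ := this
    refine le_ciSup_of_le ?_ σ₀ (surviveAbove_nonneg β n _ _ σ₀.1)
    exact (Set.finite_range _).bddAbove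
  apply squeeze_zero' (Eventually.of_forall hnonneg)
    (g := fun n : ℕ => (Real.exp 1 / α) * (1 / n))
  · filter_upwards [eventually_ge_atTop 1,
      eventually_ge_atTop ⌈(2/α)^2⌉₊] with n hn1 hn2
    have hn0 : (0:ℝ) < n := by exact_mod_cast hn1
    have hn1' : (1:ℝ) ≤ n := by exact_mod_cast hn1
    have hsq0 : 0 < Real.sqrt n := Real.sqrt_pos.mpr hn0
    have hsqsq : Real.sqrt n * Real.sqrt n = (n:ℝ) := Real.mul_self_sqrt hn0.le
    have h2α : 2 ≤ α * Real.sqrt n := by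
      have h1 : ((2/α)^2 : ℝ) ≤ n := by
        calc ((2/α)^2 : ℝ) ≤ ⌈(2/α)^2⌉₊ := Nat.le_ceil _
          _ ≤ n := by exact_mod_cast hn2
      have h2 : (2/α : ℝ) ≤ Real.sqrt n := by
        rw [show (2/α : ℝ) = Real.sqrt ((2/α)^2) from
          (Real.sqrt_sq (by positivity)).symm]
        exact Real.sqrt_le_sqrt h1
      calc (2:ℝ) = α * (2/α) := by field_simp
        _ ≤ α * Real.sqrt n := by gcongr
    set b := sstar + α / Real.sqrt n with hbdef
    have hb2 : sstar + 2 / (n:ℝ) ≤ b := by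
      rw [hbdef]
      have : 2 / (n:ℝ) ≤ α / Real.sqrt n := by
        rw [div_le_div_iff₀ hn0 hsq0]
        nlinarith
      linarith
    set T := ⌊c * n * Real.log n⌋₊ with hTdef
    set ρ := 1 - γ / (n:ℝ) with hρdef
    have hγn1 : γ / (n:ℝ) ≤ 1 := by
      rw [div_le_one hn0]; linarith
    have hρ0 : 0 ≤ ρ := by rw [hρdef]; linarith
    refine ciSup_le ?_
    intro σ
    by_cases hσ : b < mag σ.1
    · have hsb := survive_bound hβ hs0 hfix hn1 hb2 T σ.1 hσ
      rw [← hLdef, ← hγdef, ← hρdef] at hsb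
      have hbs : b - sstar = α / Real.sqrt n := by rw [hbdef]; ring
      have hm1 : mag σ.1 - sstar ≤ 1 := by
        have := mag_le_one σ.1; linarith
      have hασ : (0:ℝ) < α / Real.sqrt n := by positivity
      have h1 : (mag σ.1 - sstar) / (b - sstar) ≤ Real.sqrt n / α := by
        rw [hbs]
        calc (mag σ.1 - sstar) / (α / Real.sqrt n) ≤ 1 / (α / Real.sqrt n) := by
              gcongr
          _ = Real.sqrt n / α := one_div_div α (Real.sqrt n)
      have hρe : ρ ≤ Real.exp (-(γ/n)) := by
        have := Real.add_one_le_exp (-(γ/n))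
        rw [hρdef]; linarith
      have hpow : ρ ^ T ≤ Real.exp (-(γ/n)) ^ T := pow_le_pow_left₀ hρ0 hρe T
      have hTe : Real.exp (-(γ/n)) ^ T = Real.exp ((T:ℝ) * (-(γ/n))) :=
        (Real.exp_nat_mul _ T).symm
      have hlog0 : 0 ≤ Real.log n := Real.log_nonneg hn1'
      have hT1 : c * n * Real.log n < (T:ℝ) + 1 := Nat.lt_floor_add_one _
      have hid : (γ/n) * (c * n * Real.log n) = 2 * Real.log n := by
        rw [hcdef]; field_simp
      have hexp : (T:ℝ) * (-(γ/n)) ≤ 1 - 2 * Real.log n := by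
        have h3 : (γ/n) * (c*n*Real.log n - 1) ≤ (γ/n) * T :=
          mul_le_mul_of_nonneg_left (by linarith) (by positivity)
        have h4 : (γ/n) * (c*n*Real.log n - 1) = 2 * Real.log n - γ/n := by
          rw [mul_sub, hid, mul_one]
        nlinarith
      have hn2pos : (0:ℝ) < (n:ℝ)^2 := by positivity
      have hexp2 : Real.exp ((T:ℝ) * (-(γ/n))) ≤ Real.exp 1 * (1/(n:ℝ))^2 := by
        calc Real.exp ((T:ℝ) * (-(γ/n))) ≤ Real.exp (1 - 2*Real.log n) :=
              Real.exp_le_exp.mpr hexp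
          _ = Real.exp 1 * (1/(n:ℝ))^2 := by
              rw [Real.exp_sub, show (2:ℝ)*Real.log n = Real.log ((n:ℝ)^2) by
                rw [Real.log_pow]; push_cast; ring]
              rw [Real.exp_log hn2pos]
              field_simp
      have hρT : ρ ^ T ≤ Real.exp 1 * (1/(n:ℝ))^2 := by
        rw [hTe] at hpow; exact hpow.trans hexp2
      have hbs0 : 0 < b - sstar := by rw [hbs]; exact hασ
      have hms : sstar < mag σ.1 := by
        have h2n : (0:ℝ) < 2/(n:ℝ) := by positivity
        linarith
      have hfrac0 : 0 ≤ (mag σ.1 - sstar) / (b - sstar) :=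
        div_nonneg (by linarith) hbs0.le
      calc surviveAbove β n b T σ.1
          ≤ ρ ^ T * ((mag σ.1 - sstar) / (b - sstar)) := hsb
        _ ≤ (Real.exp 1 * (1/(n:ℝ))^2) * (Real.sqrt n / α) :=
            mul_le_mul hρT h1 hfrac0 (by positivity)
        _ = (Real.exp 1 / α) * (Real.sqrt n / (n:ℝ)^2) := by ring
        _ ≤ (Real.exp 1 / α) * (1 / n) := by
            have hsn : Real.sqrt n ≤ (n:ℝ) := by
              nlinarith [Real.sq_sqrt hn0.le, Real.sqrt_nonneg (n:ℝ)]
            have hq : Real.sqrt n / (n:ℝ)^2 ≤ 1 / n := by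
              rw [div_le_div_iff₀ hn2pos hn0]
              nlinarith
            exact mul_le_mul_of_nonneg_left hq (by positivity)
    · rw [surviveAbove_zero_of hσ]
      positivity
  · have : Filter.Tendsto (fun n : ℕ => (Real.exp 1 / α) * (1 / n)) atTop
        (nhds ((Real.exp 1 / α) * 0)) :=
      tendsto_one_div_atTop_nhds_zero_nat.const_mul _
    simpa using this

end

end CW
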